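/- Let λ be a partition of m, T a standard Young tableau of shape λ, and n a positive integer. Then, as polynomials in x_1,…,x_n, the sum of x^S over all semistandard Young tableaux S of shape λ with entries in {1,…,n} whose standardization is T equals the sum of x^U over all composition tableaux U of shape comp(Des(T)) with entries in {1,…,n}. (That is, Q_{comp(Des(T))}(x_1,…,x_n) = Σ_{std(S)=T} x^S.) -/

import Mathlib

/-!
STATEMENT 18: Let λ be a partition of m, T a standard Young tableau of shape λ, and n a
positive integer. Then, as polynomials in x_1,…,x_n, the sum of x^S over all semistandard
Young tableaux S of shape λ with entries in {1,…,n} whose standardization is T equals the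
sum of x^U over all composition tableaux U of shape comp(Des(T)) with entries in {1,…,n}.

Conventions: rows/columns and positions are 0-indexed; the entry `e ∈ {1,…,n}` is
represented by `e - 1 : Fin n`, and the variable `x_e` is `MvPolynomial.X (e-1 : Fin n)`.
The function `bx` records, for each `k ∈ {1,…,m}`, the (unique) box of `λ` in which `T` has
entry `k`; `Des(T)` is the set of `k ∈ {1,…,m-1}` whose box has strictly smaller row index
than the box of `k+1`.
-/

open scoped Classical
open MvPolynomial

/-- The boxes of the Young diagram of `lam`. -/
def boxes (lam : List ℕ) : Finset (ℕ × ℕ) :=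
  (Finset.range lam.length ×ˢ Finset.range (lam.foldr max 0)).filter
    (fun p => p.2 < lam.getD p.1 0)

/-- `S` is a semistandard Young tableau of shape the partition `lam`. -/
structure IsSSYT (lam : List ℕ) (S : ℕ × ℕ → ℕ) : Prop where
  pos : ∀ p ∈ boxes lam, 1 ≤ S p
  row_weak : ∀ p ∈ boxes lam, ∀ q ∈ boxes lam, p.1 = q.1 → p.2 ≤ q.2 → S p ≤ S q
  col_strict : ∀ p ∈ boxes lam, ∀ q ∈ boxes lam, p.2 = q.2 → p.1 < q.1 → S p < S q

/-- `T` is a standard Young tableau of shape `lam` with `m` boxes. -/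
def IsSYT (lam : List ℕ) (m : ℕ) (T : ℕ × ℕ → ℕ) : Prop :=
  IsSSYT lam T ∧ ∀ v : ℕ, 1 ≤ v → v ≤ m →
    ((boxes lam).filter (fun p => T p = v)).card = 1

/-- The standardization of a semistandard Young tableau `S` of shape `lam` at a box `p`. -/
def standardization (lam : List ℕ) (S : ℕ × ℕ → ℕ) (p : ℕ × ℕ) : ℕ :=
  ((boxes lam).filter (fun q => S q < S p ∨ (S q = S p ∧ q.2 < p.2))).card + 1

/-- The extension of a `Fin n`-valued filling of the boxes of `lam` to a `ℕ`-valued filling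
(the value `v : Fin n` represents the entry `v + 1`; boxes outside the diagram get `0`). -/
noncomputable def extFill (lam : List ℕ) {n : ℕ} (S : {p // p ∈ boxes lam} → Fin n) :
    ℕ × ℕ → ℕ :=
  fun p => if h : p ∈ boxes lam then (S ⟨p, h⟩ : ℕ) + 1 else 0

/-- Lexicographic order on boxes. -/
def boxLe (p q : ℕ × ℕ) : Prop := p.1 < q.1 ∨ (p.1 = q.1 ∧ p.2 ≤ q.2)

/-- A composition tableau of shape `lam` with entries in `{1,…,n}`. -/
def IsCompTabFn (lam : List ℕ) {n : ℕ} (U : {p // p ∈ boxes lam} → Fin n) : Prop :=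
  (∀ p q : {p // p ∈ boxes lam}, boxLe p.1 q.1 → U p ≤ U q) ∧
  (∀ p q : {p // p ∈ boxes lam}, p.1.1 < q.1.1 → U p < U q)

/-- The composition of `m` corresponding to a subset `D = {i_1 < ⋯ < i_{k-1}}` of
`{1,…,m-1}`: the list `(i_1, i_2 − i_1, …, m − i_{k−1})` of successive differences. -/
def compOfSet (m : ℕ) (D : Finset ℕ) : List ℕ :=
  let l := D.sort (· ≤ ·) ++ [m]
  l.zipWith (fun a b => a - b) (0 :: l)

lemma getD_le_foldr_max (l : List ℕ) (i : ℕ) : l.getD i 0 ≤ l.foldr max 0 := by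
  induction l generalizing i with
  | nil => simp
  | cons a t ih =>
    cases i with
    | zero => simp [List.getD]
    | succ j =>
      simp only [List.getD_cons_succ, List.foldr_cons]
      exact le_trans (ih j) (le_max_right _ _)

lemma mem_boxes {lam : List ℕ} {p : ℕ × ℕ} :
    p ∈ boxes lam ↔ p.1 < lam.length ∧ p.2 < lam.getD p.1 0 := by
  constructor
  · intro h
    simp only [boxes, Finset.mem_filter, Finset.mem_product, Finset.mem_range] at h
    exact ⟨h.1.1, h.2⟩
  · intro ⟨h1, h2⟩
    simp only [boxes, Finset.mem_filter, Finset.mem_product, Finset.mem_range]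
    exact ⟨⟨h1, lt_of_lt_of_le h2 (getD_le_foldr_max lam p.1)⟩, h2⟩

-- cards
lemma sum_getD (l : List ℕ) : ∑ i ∈ Finset.range l.length, l.getD i 0 = l.sum := by
  induction l with
  | nil => simp
  | cons a t ih =>
    rw [List.length_cons, Finset.sum_range_succ']
    simp only [List.getD_cons_succ, List.getD_cons_zero, List.sum_cons]
    rw [ih]; ring

lemma card_boxes (lam : List ℕ) : (boxes lam).card = lam.sum := by
  have : boxes lam = (Finset.range lam.length).biUnion
      (fun i => {i} ×ˢ Finset.range (lam.getD i 0)) := by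
    ext p
    simp only [mem_boxes, Finset.mem_biUnion, Finset.mem_range, Finset.mem_product,
      Finset.mem_singleton]
    constructor
    · intro ⟨h1, h2⟩; exact ⟨p.1, h1, rfl, h2⟩
    · rintro ⟨i, hi, rfl, h2⟩; exact ⟨hi, h2⟩
  rw [this, Finset.card_biUnion]
  · simp only [Finset.card_product, Finset.card_singleton, Finset.card_range, one_mul]
    exact sum_getD lam
  · intro i _ j _ hij
    simp only [Finset.disjoint_left]
    rintro p hp hq
    simp only [Finset.mem_product, Finset.mem_singleton] at hp hq
    exact hij (hp.1 ▸ hq.1 ▸ rfl)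

lemma countP_le_len (s : List ℕ) (p : ℕ → Bool) : (s.filter p).length ≤ s.length :=
  List.length_filter_le _ _

lemma sorted_filter_le_iff (s : List ℕ) (hs : s.Pairwise (· < ·)) (k : ℕ) :
    ∀ i (h : i < s.length),
      (s.get ⟨i, h⟩ ≤ k ↔ i < (s.filter (fun d => d ≤ k)).length) := by
  induction s with
  | nil => simp
  | cons a t ih =>
    have hst : t.Pairwise (· < ·) := hs.of_cons
    have ha : ∀ b ∈ t, a < b := (List.pairwise_cons.mp hs).1
    intro i h
    by_cases hak : a ≤ k
    · rw [List.filter_cons_of_pos (by simpa using hak)]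
      cases i with
      | zero => simpa using hak
      | succ j =>
        simp only [List.get_cons_succ, List.length_cons]
        rw [ih hst j (by simpa using h)]
        omega
    · have ht : t.filter (fun d => d ≤ k) = [] := by
        rw [List.filter_eq_nil_iff]
        intro b hb
        simp only [decide_eq_true_eq]
        exact fun hbk => hak (le_of_lt (lt_of_lt_of_le (ha b hb) hbk))
      rw [List.filter_cons_of_neg (by simpa using hak), ht]
      simp only [List.length_nil]
      constructor
      · intro hle
        exfalso
        cases i with
        | zero => exact hak (by simpa using hle)
        | succ j =>
          have hmem' : t.get ⟨j, by simpa using h⟩ ∈ t := List.get_mem _ _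
          have : a < t.get ⟨j, by simpa using h⟩ := ha _ hmem'
          simp only [List.get_cons_succ] at hle
          omega
      · omega

lemma filter_le_succ_len (s : List ℕ) (hs : s.Nodup) (k : ℕ) :
    (s.filter (fun d => d ≤ k + 1)).length
      = (s.filter (fun d => d ≤ k)).length + (if k + 1 ∈ s then 1 else 0) := by
  induction s with
  | nil => simp
  | cons a t ih =>
    have hnd : t.Nodup := hs.of_cons
    have iht := ih hnd
    by_cases h1 : a = k + 1
    · subst h1
      have hnt : (k + 1 : ℕ) ∉ t := (List.nodup_cons.mp hs).1
      rw [List.filter_cons_of_pos (by simp), List.filter_cons_of_neg (by simp)]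
      simp only [List.length_cons, List.mem_cons, true_or, if_true]
      rw [iht, if_neg hnt]
    · have hmem : (k + 1 ∈ a :: t) = (k + 1 ∈ t) := by
        simp only [List.mem_cons]
        exact propext ⟨fun h => h.elim (fun h' => absurd h'.symm h1) id, Or.inr⟩
      by_cases h2 : a ≤ k
      · rw [List.filter_cons_of_pos (by simp; omega), List.filter_cons_of_pos (by simpa using h2)]
        simp only [List.length_cons, hmem]
        omega
      · rw [List.filter_cons_of_neg (by simp; omega), List.filter_cons_of_neg (by simpa using h2)]
        rw [iht]
        congr 1
        by_cases hkt : k + 1 ∈ t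
        · simp [hkt]
        · have hna : k + 1 ∉ a :: t := by
            simp only [List.mem_cons]
            rintro (h | h)
            · exact h1 h.symm
            · exact hkt h
          simp [hkt, hna]

section
variable {m : ℕ} {lam : List ℕ} {T : ℕ × ℕ → ℕ} {bx : ℕ → ℕ × ℕ}
variable (hsum : lam.sum = m) (hT : IsSYT lam m T)
    (hbx : ∀ k : ℕ, 1 ≤ k → k ≤ m → bx k ∈ boxes lam ∧ T (bx k) = k)

include hT in
lemma T_inj {p q : ℕ × ℕ} (hp : p ∈ boxes lam) (hq : q ∈ boxes lam)
    (hv : 1 ≤ T p) (hv' : T p ≤ m) (h : T p = T q) : p = q := by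
  have h1 := hT.2 (T p) hv hv'
  rw [Finset.card_eq_one] at h1
  obtain ⟨a, ha⟩ := h1
  have hpa : p ∈ (boxes lam).filter (fun r => T r = T p) := by
    simp [Finset.mem_filter, hp]
  have hqa : q ∈ (boxes lam).filter (fun r => T r = T p) := by
    simp [Finset.mem_filter, hq, h.symm]
  rw [ha, Finset.mem_singleton] at hpa hqa
  rw [hpa, hqa]

include hsum hT hbx in
lemma T_range : ∀ p ∈ boxes lam, 1 ≤ T p ∧ T p ≤ m ∧ bx (T p) = p := by
  -- the union of the fibers is all of boxes
  have hcov : boxes lam = (Finset.Icc 1 m).biUnion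
      (fun v => (boxes lam).filter (fun p => T p = v)) := by
    apply (Finset.eq_of_subset_of_card_le ?_ ?_).symm
    · intro p hp
      simp only [Finset.mem_biUnion, Finset.mem_filter] at hp
      exact hp.choose_spec.2.1
    · rw [Finset.card_biUnion, card_boxes, hsum]
      · have : ∀ v ∈ Finset.Icc 1 m, ((boxes lam).filter (fun p => T p = v)).card = 1 := by
          intro v hv
          rw [Finset.mem_Icc] at hv
          exact hT.2 v hv.1 hv.2
        rw [Finset.sum_congr rfl this]
        simp [Nat.card_Icc]
      · intro a _ b _ hab
        simp only [Finset.disjoint_left, Finset.mem_filter]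
        rintro p ⟨_, hpa⟩ ⟨_, hpb⟩
        exact hab (hpa ▸ hpb ▸ rfl)
  intro p hp
  have : p ∈ (Finset.Icc 1 m).biUnion (fun v => (boxes lam).filter (fun q => T q = v)) :=
    hcov ▸ hp
  simp only [Finset.mem_biUnion, Finset.mem_filter, Finset.mem_Icc] at this
  obtain ⟨v, ⟨hv1, hv2⟩, _, hTv⟩ := this
  have h1 : 1 ≤ T p := hTv ▸ hv1
  have h2 : T p ≤ m := hTv ▸ hv2
  refine ⟨h1, h2, ?_⟩
  have hb := hbx (T p) h1 h2
  exact T_inj hT hb.1 hp (by rw [hb.2]; exact h1) (by rw [hb.2]; exact h2) hb.2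

end

lemma getD_append_lt (l1 l2 : List ℕ) (i : ℕ) (h : i < l1.length) (d : ℕ) :
    (l1 ++ l2).getD i d = l1.getD i d := by
  rw [List.getD_eq_getElem _ _ (by simp; omega), List.getD_eq_getElem _ _ h,
    List.getElem_append_left]

lemma getD_append_last (l : List ℕ) (m i d : ℕ) (h : i = l.length) :
    (l ++ [m]).getD i d = m := by
  subst h
  rw [List.getD_eq_getElem _ _ (by simp)]
  simp

/-! ### composition side -/

def sL (D : Finset ℕ) : List ℕ := D.sort (· ≤ ·)

def fP (m : ℕ) (D : Finset ℕ) (i : ℕ) : ℕ := ((0 : ℕ) :: (sL D ++ [m])).getD i 0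

def rwF (D : Finset ℕ) (k : ℕ) : ℕ := ((sL D).filter (fun d => d ≤ k)).length

section Comp
variable (m : ℕ) (D : Finset ℕ)

lemma sL_sorted : (sL D).Pairwise (· < ·) := (Finset.sortedLT_sort D).pairwise
lemma sL_nodup : (sL D).Nodup := Finset.sort_nodup D _
lemma sL_mem {x : ℕ} : x ∈ sL D ↔ x ∈ D := Finset.mem_sort _

lemma fP_zero : fP m D 0 = 0 := rfl

lemma fP_succ (i : ℕ) : fP m D (i + 1) = (sL D ++ [m]).getD i 0 := by
  simp [fP, List.getD_cons_succ]

lemma fP_succ_lt (i : ℕ) (h : i < (sL D).length) :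
    fP m D (i + 1) = (sL D).get ⟨i, h⟩ := by
  rw [fP_succ, getD_append_lt _ _ _ h, List.getD_eq_getElem _ _ h]
  simp

lemma fP_last : fP m D ((sL D).length + 1) = m := by
  rw [fP_succ, getD_append_last _ _ _ _ rfl]

lemma nu_len : (compOfSet m D).length = (sL D).length + 1 := by
  simp [compOfSet, List.length_zipWith, sL]

lemma nu_getD (i : ℕ) (h : i < (sL D).length + 1) :
    (compOfSet m D).getD i 0 = fP m D (i + 1) - fP m D i := by
  have hlen : i < (compOfSet m D).length := by rw [nu_len]; exact h
  rw [List.getD_eq_getElem _ _ hlen]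
  show (List.zipWith (fun a b => a - b) (Finset.sort D (· ≤ ·) ++ [m])
    (0 :: (Finset.sort D (· ≤ ·) ++ [m])))[i]'(by simpa [compOfSet] using hlen) = _
  rw [List.getElem_zipWith]
  have hb1 : i < (sL D ++ [m]).length := by
    rw [List.length_append]
    simpa using h
  have hb2 : i < ((0 : ℕ) :: (sL D ++ [m])).length := by
    rw [List.length_cons, List.length_append]
    simp only [List.length_cons, List.length_nil]
    omega
  have h1 : fP m D (i + 1) = (sL D ++ [m])[i]'hb1 := by
    rw [fP_succ, List.getD_eq_getElem _ _ hb1]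
  have h2 : fP m D i = ((0 : ℕ) :: (sL D ++ [m]))[i]'hb2 := by
    rw [fP, List.getD_eq_getElem _ _ hb2]
  rw [h1, h2]
  rfl

variable {m D} in
lemma sL_mem_Ioo (hD : D ⊆ Finset.Ioo 0 m) {x : ℕ} (hx : x ∈ sL D) : 0 < x ∧ x < m := by
  have := hD ((sL_mem D).mp hx)
  simpa [Finset.mem_Ioo] using this

variable {m D} in
lemma fP_mono_step (hD : D ⊆ Finset.Ioo 0 m) (i : ℕ) (h : i ≤ (sL D).length) :
    fP m D i ≤ fP m D (i + 1) := by
  cases i with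
  | zero => exact Nat.zero_le _
  | succ j =>
    have hj : j < (sL D).length := h
    rw [fP_succ_lt m D j hj]
    by_cases hj1 : j + 1 < (sL D).length
    · rw [fP_succ_lt m D (j+1) hj1]
      exact le_of_lt ((sL_sorted D).rel_get_of_lt (by simp))
    · have he : j + 1 = (sL D).length := by omega
      rw [he, fP_last]
      exact le_of_lt (sL_mem_Ioo hD (List.get_mem _ _)).2

variable {m D} in
lemma fP_mono (hD : D ⊆ Finset.Ioo 0 m) {a b : ℕ} (hab : a ≤ b) (hb : b ≤ (sL D).length + 1) :
    fP m D a ≤ fP m D b := by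
  induction b with
  | zero =>
    have : a = 0 := by omega
    subst this; rfl
  | succ c ih =>
    by_cases hac : a = c + 1
    · subst hac; rfl
    · exact le_trans (ih (by omega) (by omega)) (fP_mono_step hD c (by omega))

variable {m D} in
lemma mem_boxes_nu (hD : D ⊆ Finset.Ioo 0 m) {i j : ℕ} :
    (i, j) ∈ boxes (compOfSet m D) ↔
      i < (sL D).length + 1 ∧ fP m D i + j < fP m D (i + 1) := by
  rw [mem_boxes, nu_len]
  constructor
  · rintro ⟨h1, h2⟩
    rw [nu_getD m D i h1] at h2
    exact ⟨h1, by omega⟩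
  · rintro ⟨h1, h2⟩
    refine ⟨h1, ?_⟩
    rw [nu_getD m D i h1]
    have : fP m D i ≤ fP m D (i + 1) := fP_mono_step hD i (by omega)
    omega

lemma rwF_le_len (k : ℕ) : rwF D k ≤ (sL D).length := List.length_filter_le _ _

lemma fP_rwF_le (k : ℕ) : fP m D (rwF D k) ≤ k := by
  rcases Nat.eq_zero_or_pos (rwF D k) with h | h
  · rw [h]; exact Nat.zero_le _
  · have hlt : rwF D k - 1 < (sL D).length := by
      have := rwF_le_len D k; omega
    rw [show rwF D k = (rwF D k - 1) + 1 by omega, fP_succ_lt m D _ hlt]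
    have hrw : rwF D k = ((sL D).filter (fun d => d ≤ k)).length := rfl
    exact (sorted_filter_le_iff _ (sL_sorted D) k _ hlt).mpr (by omega)

lemma lt_fP_rwF_succ {k : ℕ} (hk : k < m) : k < fP m D (rwF D k + 1) := by
  have hrw : rwF D k = ((sL D).filter (fun d => d ≤ k)).length := rfl
  by_cases h : rwF D k < (sL D).length
  · rw [fP_succ_lt m D _ h]
    by_contra hle
    push_neg at hle
    have := (sorted_filter_le_iff _ (sL_sorted D) k _ h).mp hle
    omega
  · have he : rwF D k = (sL D).length := le_antisymm (rwF_le_len D k) (by omega)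
    rw [he, fP_last]
    exact hk

variable {m D} in
lemma rwF_fP_add (hD : D ⊆ Finset.Ioo 0 m) {i j : ℕ} (hi : i < (sL D).length + 1)
    (hij : fP m D i + j < fP m D (i + 1)) : rwF D (fP m D i + j) = i := by
  set k := fP m D i + j with hk
  have hrw : rwF D k = ((sL D).filter (fun d => d ≤ k)).length := rfl
  have hle : i ≤ rwF D k := by
    rcases Nat.eq_zero_or_pos i with h0 | h0
    · omega
    · have hlt : i - 1 < (sL D).length := by omega
      have hget : (sL D).get ⟨i - 1, hlt⟩ = fP m D i := by
        conv_rhs => rw [show i = (i - 1) + 1 by omega]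
        rw [fP_succ_lt m D _ hlt]
      have := (sorted_filter_le_iff _ (sL_sorted D) k _ hlt).mp (by rw [hget]; omega)
      omega
  have hge : rwF D k ≤ i := by
    by_contra hgt
    push_neg at hgt
    have hi' : i < (sL D).length := lt_of_lt_of_le hgt (rwF_le_len D k)
    have := (sorted_filter_le_iff _ (sL_sorted D) k _ hi').mpr (by omega)
    rw [← fP_succ_lt m D i hi'] at this
    omega
  omega

variable {m D} in
lemma fP_add_lt_m (hD : D ⊆ Finset.Ioo 0 m) {i j : ℕ} (hi : i < (sL D).length + 1)
    (hij : fP m D i + j < fP m D (i + 1)) : fP m D i + j < m := by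
  have : fP m D (i + 1) ≤ fP m D ((sL D).length + 1) := fP_mono hD (by omega) (le_refl _)
  rw [fP_last] at this
  omega

lemma rwF_succ (k : ℕ) :
    rwF D (k + 1) = rwF D k + (if k + 1 ∈ D then 1 else 0) := by
  unfold rwF
  rw [filter_le_succ_len _ (sL_nodup D) k]
  congr 1
  by_cases h : k + 1 ∈ D <;> simp [sL_mem, h]

variable {m D} in
/-- The equivalence between `Fin m` and the boxes of `compOfSet m D`. -/
def eC (hD : D ⊆ Finset.Ioo 0 m) : Fin m ≃ {p // p ∈ boxes (compOfSet m D)} where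
  toFun k := ⟨(rwF D k, (k : ℕ) - fP m D (rwF D k)), by
    rw [mem_boxes_nu hD]
    refine ⟨by have := rwF_le_len D (k : ℕ); omega, ?_⟩
    have h1 := fP_rwF_le m D (k : ℕ)
    have h2 := lt_fP_rwF_succ m D k.isLt
    omega⟩
  invFun p := ⟨fP m D p.1.1 + p.1.2, by
    obtain ⟨⟨i, j⟩, hp⟩ := p
    rw [mem_boxes_nu hD] at hp
    exact fP_add_lt_m hD hp.1 hp.2⟩
  left_inv k := by
    have h1 := fP_rwF_le m D (k : ℕ)
    apply Fin.ext
    show fP m D (rwF D (k : ℕ)) + ((k : ℕ) - fP m D (rwF D (k : ℕ))) = (k : ℕ)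
    omega
  right_inv p := by
    obtain ⟨⟨i, j⟩, hp⟩ := p
    have hp' := (mem_boxes_nu hD).mp hp
    have hr : rwF D (fP m D i + j) = i := rwF_fP_add hD hp'.1 hp'.2
    have h1 := fP_rwF_le m D (fP m D i + j)
    apply Subtype.ext
    show (rwF D (fP m D i + j), fP m D i + j - fP m D (rwF D (fP m D i + j))) = (i, j)
    rw [hr]
    simp only [Prod.mk.injEq, true_and]
    omega

/-! ### the middle predicate -/

def Pmid (m n : ℕ) (D : Finset ℕ) (u : Fin m → Fin n) : Prop :=
  ∀ i : ℕ, (h : i + 1 < m) → u ⟨i, Nat.lt_of_succ_lt h⟩ ≤ u ⟨i + 1, h⟩ ∧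
      (i + 1 ∈ D → u ⟨i, Nat.lt_of_succ_lt h⟩ < u ⟨i + 1, h⟩)

variable {m D} in
lemma Pmid_mono {n : ℕ} {u : Fin m → Fin n} (hu : Pmid m n D u) :
    ∀ b a, a ≤ b → ∀ (ha : a < m) (hb : b < m), u ⟨a, ha⟩ ≤ u ⟨b, hb⟩ := by
  intro b
  induction b with
  | zero =>
    intro a hab ha hb
    have : a = 0 := by omega
    subst this; rfl
  | succ c ih =>
    intro a hab ha hb
    by_cases hac : a = c + 1
    · subst hac; rfl
    · exact le_trans (ih a (by omega) ha (by omega)) (hu c hb).1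

variable {m D} in
lemma Pmid_strict {n : ℕ} {u : Fin m → Fin n} (hu : Pmid m n D u)
    {a d b : ℕ} (had : a ≤ d) (hdb : d + 1 ≤ b) (hb : b < m) (hd : d + 1 ∈ D)
    (ha : a < m) : u ⟨a, ha⟩ < u ⟨b, hb⟩ := by
  have hdm : d + 1 < m := by omega
  calc u ⟨a, ha⟩ ≤ u ⟨d, by omega⟩ := Pmid_mono hu d a had ha (by omega)
    _ < u ⟨d + 1, hdm⟩ := (hu d hdm).2 hd
    _ ≤ u ⟨b, hb⟩ := Pmid_mono hu b (d + 1) hdb hdm hb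

variable {m D} in
lemma Pmid_mono' {n : ℕ} {u : Fin m → Fin n} (hu : Pmid m n D u)
    (a b : Fin m) (hab : a ≤ b) : u a ≤ u b := by
  have := Pmid_mono hu b a hab a.isLt b.isLt
  simpa using this

variable {m D} in
lemma Pmid_strict' {n : ℕ} {u : Fin m → Fin n} (hu : Pmid m n D u)
    (a b : Fin m) (d : ℕ) (had : (a : ℕ) ≤ d) (hdb : d + 1 ≤ (b : ℕ))
    (hd : d + 1 ∈ D) : u a < u b := by
  have := Pmid_strict hu had hdb b.isLt hd a.isLt
  simpa using this

/-! ### Lemma B : characterization of composition tableaux -/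

variable {m D} in
lemma compTab_iff {n : ℕ} (hD : D ⊆ Finset.Ioo 0 m)
    (U : {p // p ∈ boxes (compOfSet m D)} → Fin n) :
    IsCompTabFn (compOfSet m D) U ↔ Pmid m n D (fun k => U (eC hD k)) := by
  constructor
  · rintro ⟨hle, hlt⟩ i hi
    have hrow : rwF D (i + 1) = rwF D i + (if i + 1 ∈ D then 1 else 0) := rwF_succ D i
    constructor
    · apply hle
      show boxLe (rwF D i, i - fP m D (rwF D i)) (rwF D (i+1), (i+1) - fP m D (rwF D (i+1)))
      unfold boxLe
      by_cases hmem : i + 1 ∈ D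
      · left
        rw [hrow, if_pos hmem]
        omega
      · right
        rw [hrow, if_neg hmem, add_zero]
        refine ⟨rfl, ?_⟩
        have := fP_rwF_le m D i
        simp only
        omega
    · intro hmem
      apply hlt
      show (rwF D i, i - fP m D (rwF D i)).1 < (rwF D (i+1), (i+1) - fP m D (rwF D (i+1))).1
      simp only
      rw [hrow, if_pos hmem]
      omega
  · intro hu
    have hinv : ∀ p : {p // p ∈ boxes (compOfSet m D)},
        U p = (fun k => U (eC hD k)) ((eC hD).symm p) := by
      intro p
      simp only [Equiv.apply_symm_apply]
    constructor
    · intro p q hpq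
      rw [hinv p, hinv q]
      apply Pmid_mono' hu
      obtain ⟨⟨i, j⟩, hp⟩ := p
      obtain ⟨⟨i', j'⟩, hq⟩ := q
      replace hpq : i < i' ∨ (i = i' ∧ j ≤ j') := hpq
      have hp' := (mem_boxes_nu hD).mp hp
      have hq' := (mem_boxes_nu hD).mp hq
      have hidx : fP m D i + j ≤ fP m D i' + j' := by
        rcases hpq with h | ⟨h, h2⟩
        · have : fP m D (i + 1) ≤ fP m D i' := fP_mono hD (by omega) (by omega)
          omega
        · subst h
          omega
      rw [Fin.le_def]
      exact hidx
    · intro p q hpq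
      rw [hinv p, hinv q]
      obtain ⟨⟨i, j⟩, hp⟩ := p
      obtain ⟨⟨i', j'⟩, hq⟩ := q
      replace hpq : i < i' := hpq
      have hp' := (mem_boxes_nu hD).mp hp
      have hq' := (mem_boxes_nu hD).mp hq
      have hilen : i < (sL D).length := by omega
      have hd : fP m D (i + 1) ∈ D := by
        rw [fP_succ_lt m D i hilen]
        exact (sL_mem D).mp (List.get_mem _ _)
      have hdpos : 0 < fP m D (i + 1) := (Finset.mem_Ioo.mp (hD hd)).1
      have h2 : fP m D (i + 1) ≤ fP m D i' + j' := by
        have : fP m D (i + 1) ≤ fP m D i' := fP_mono hD (by omega) (by omega)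
        omega
      apply Pmid_strict' hu _ _ (fP m D (i + 1) - 1)
      · show fP m D i + j ≤ fP m D (i + 1) - 1
        omega
      · show fP m D (i + 1) - 1 + 1 ≤ fP m D i' + j'
        omega
      · rw [show fP m D (i + 1) - 1 + 1 = fP m D (i + 1) by omega]
        exact hd

end Comp
section SSYTside
variable {m n : ℕ} {lam : List ℕ} {T : ℕ × ℕ → ℕ} {bx : ℕ → ℕ × ℕ}

/-- The descent set. -/
def DT (m : ℕ) (bx : ℕ → ℕ × ℕ) : Finset ℕ :=
  (Finset.Ioo 0 m).filter (fun k => (bx k).1 < (bx (k + 1)).1)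

lemma mem_DT {m : ℕ} {bx : ℕ → ℕ × ℕ} {k : ℕ} :
    k ∈ DT m bx ↔ 0 < k ∧ k < m ∧ (bx k).1 < (bx (k + 1)).1 := by
  simp [DT, Finset.mem_Ioo, and_assoc]

variable (hdec : List.Pairwise (· ≥ ·) lam) (hsum : lam.sum = m) (hT : IsSYT lam m T)
    (hbx : ∀ k : ℕ, 1 ≤ k → k ≤ m → bx k ∈ boxes lam ∧ T (bx k) = k)

include hdec in
lemma boxes_rect {q : ℕ × ℕ} (hq : q ∈ boxes lam) {i : ℕ} (hi : i ≤ q.1) :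
    (i, q.2) ∈ boxes lam := by
  rw [mem_boxes] at hq ⊢
  rcases eq_or_lt_of_le hi with h | h
  · subst h; exact ⟨hq.1, hq.2⟩
  · have hlen : i < lam.length := lt_trans h hq.1
    refine ⟨hlen, ?_⟩
    have hrel : lam.get ⟨q.1, hq.1⟩ ≤ lam.get ⟨i, hlen⟩ := hdec.rel_get_of_lt (by simpa)
    rw [List.getD_eq_getElem _ _ hq.1] at hq
    rw [List.getD_eq_getElem _ _ hlen]
    simp only [List.get_eq_getElem] at hrel
    omega

/-- Equivalence between `Fin m` and the boxes, via `bx`. -/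
noncomputable def eBox (hsum : lam.sum = m) (hT : IsSYT lam m T)
    (hbx : ∀ k : ℕ, 1 ≤ k → k ≤ m → bx k ∈ boxes lam ∧ T (bx k) = k) :
    Fin m ≃ {p // p ∈ boxes lam} where
  toFun k := ⟨bx ((k : ℕ) + 1), (hbx _ (by omega) (by omega)).1⟩
  invFun p := ⟨T p.1 - 1, by
    have h := T_range hsum hT hbx p.1 p.2
    omega⟩
  left_inv k := by
    apply Fin.ext
    have h := (hbx ((k : ℕ) + 1) (by omega) (by omega)).2
    show T (bx ((k : ℕ) + 1)) - 1 = (k : ℕ)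
    omega
  right_inv p := by
    apply Subtype.ext
    have h := T_range hsum hT hbx p.1 p.2
    show bx (T p.1 - 1 + 1) = p.1
    rw [show T p.1 - 1 + 1 = T p.1 by omega]
    exact h.2.2

lemma extFill_box {S : {p // p ∈ boxes lam} → Fin n} {p : ℕ × ℕ} (h : p ∈ boxes lam) :
    extFill lam S p = (S ⟨p, h⟩ : ℕ) + 1 := dif_pos h

/-- strict increase of std along the relevant order -/
lemma std_lt {E : ℕ × ℕ → ℕ} {p q : ℕ × ℕ} (hp : p ∈ boxes lam) (hq : q ∈ boxes lam)
    (h : E q < E p ∨ (E q = E p ∧ q.2 < p.2)) :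
    standardization lam E q < standardization lam E p := by
  unfold standardization
  have hss : (boxes lam).filter (fun x => E x < E q ∨ (E x = E q ∧ x.2 < q.2)) ⊂
      (boxes lam).filter (fun x => E x < E p ∨ (E x = E p ∧ x.2 < p.2)) := by
    rw [Finset.ssubset_iff_of_subset]
    · refine ⟨q, ?_, ?_⟩
      · rw [Finset.mem_filter]; exact ⟨hq, h⟩
      · rw [Finset.mem_filter]
        rintro ⟨-, h' | ⟨h', h''⟩⟩
        · omega
        · omega
    · intro x hx
      rw [Finset.mem_filter] at hx ⊢
      refine ⟨hx.1, ?_⟩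
      rcases hx.2 with h' | ⟨h', h''⟩ <;> rcases h with h0 | ⟨h0, h1⟩
      · left; omega
      · left; omega
      · left; omega
      · right; exact ⟨by omega, by omega⟩
  have := Finset.card_lt_card hss
  omega

lemma std_eq_of {E : ℕ × ℕ → ℕ} {p q : ℕ × ℕ}
    (h1 : E q = E p) (h2 : q.2 = p.2) :
    standardization lam E q = standardization lam E p := by
  unfold standardization
  congr 1
  apply Finset.card_bij (fun x _ => x) <;> intros <;>
    simp_all [Finset.mem_filter] <;> omega


include hdec hsum hT hbx in
set_option maxHeartbeats 2000000 in
lemma ssyt_iff (S : {p // p ∈ boxes lam} → Fin n) :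
    (IsSSYT lam (extFill lam S) ∧
      ∀ p ∈ boxes lam, standardization lam (extFill lam S) p = T p)
    ↔ Pmid m n (DT m bx) (fun k => S (eBox hsum hT hbx k)) := by
  set E := extFill lam S with hE
  have hbox : ∀ k (hk : k < m), bx (k + 1) ∈ boxes lam :=
    fun k hk => (hbx (k + 1) (by omega) (by omega)).1
  have hTbx : ∀ k (hk : k < m), T (bx (k + 1)) = k + 1 :=
    fun k hk => (hbx (k + 1) (by omega) (by omega)).2
  constructor
  · rintro ⟨hS, hstd⟩ i hi
    set p := bx (i + 1) with hpdef
    set q := bx (i + 1 + 1) with hqdef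
    have hp : p ∈ boxes lam := hbox i (by omega)
    have hq : q ∈ boxes lam := hbox (i + 1) hi
    have hstdp : standardization lam E p = i + 1 := by rw [hstd p hp, hTbx i (by omega)]
    have hstdq : standardization lam E q = i + 2 := by
      rw [hstd q hq, hTbx (i + 1) hi]
    have hnot : ¬ (E q < E p ∨ (E q = E p ∧ q.2 < p.2)) := by
      intro h
      have := std_lt hp hq h
      omega
    push_neg at hnot
    obtain ⟨hle, hcol⟩ := hnot
    have hEpq : E p ≤ E q := hle
    have hne_col : E q = E p → q.2 ≠ p.2 := by
      intro h1 h2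
      have := std_eq_of (lam := lam) (E := E) h1 h2
      omega
    constructor
    · have e1 : E p = (S ⟨p, hp⟩ : ℕ) + 1 := extFill_box hp
      have e2 : E q = (S ⟨q, hq⟩ : ℕ) + 1 := extFill_box hq
      show S ⟨p, hp⟩ ≤ S ⟨q, hq⟩
      rw [Fin.le_def]
      omega
    · intro hmem
      rw [mem_DT] at hmem
      have hrow : p.1 < q.1 := hmem.2.2
      have hEne : E p ≠ E q := by
        intro heq
        have hcol' : p.2 < q.2 := by
          rcases lt_trichotomy p.2 q.2 with h | h | h
          · exact h
          · exact absurd h.symm (hne_col heq.symm)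
          · exact absurd h (by have := hcol heq.symm; omega)
        have hw : (p.1, q.2) ∈ boxes lam := boxes_rect hdec hq (le_of_lt hrow)
        have h1 : E p ≤ E (p.1, q.2) :=
          hS.row_weak p hp (p.1, q.2) hw rfl (le_of_lt hcol')
        have h2 : E (p.1, q.2) < E q :=
          hS.col_strict (p.1, q.2) hw q hq rfl hrow
        omega
      have e1 : E p = (S ⟨p, hp⟩ : ℕ) + 1 := extFill_box hp
      have e2 : E q = (S ⟨q, hq⟩ : ℕ) + 1 := extFill_box hq
      show S ⟨p, hp⟩ < S ⟨q, hq⟩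
      rw [Fin.lt_def]
      omega
  · intro hu
    have hrange := T_range hsum hT hbx
    have chainE : ∀ a b : ℕ, 1 ≤ a → a ≤ b → b ≤ m → E (bx a) ≤ E (bx b) := by
      intro a b ha hab hb
      obtain ⟨a', rfl⟩ : ∃ a', a = a' + 1 := ⟨a - 1, by omega⟩
      obtain ⟨b', rfl⟩ : ∃ b', b = b' + 1 := ⟨b - 1, by omega⟩
      have hmono := Pmid_mono' hu ⟨a', by omega⟩ ⟨b', by omega⟩ (by rw [Fin.mk_le_mk]; omega)
      have hle : S ⟨bx (a' + 1), hbox a' (by omega)⟩ ≤ S ⟨bx (b' + 1), hbox b' (by omega)⟩ :=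
        hmono
      have e1 : E (bx (a' + 1)) = (S ⟨bx (a' + 1), hbox a' (by omega)⟩ : ℕ) + 1 :=
        extFill_box _
      have e2 : E (bx (b' + 1)) = (S ⟨bx (b' + 1), hbox b' (by omega)⟩ : ℕ) + 1 :=
        extFill_box _
      rw [e1, e2]
      exact Nat.add_le_add_right (Fin.le_def.mp hle) 1
    have strictE : ∀ a d b : ℕ, 1 ≤ a → a ≤ d → d < b → b ≤ m → d ∈ DT m bx →
        E (bx a) < E (bx b) := by
      intro a d b ha had hdb hb hd
      have hd0 : 0 < d := (mem_DT.mp hd).1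
      obtain ⟨a', rfl⟩ : ∃ a', a = a' + 1 := ⟨a - 1, by omega⟩
      obtain ⟨b', rfl⟩ : ∃ b', b = b' + 1 := ⟨b - 1, by omega⟩
      have hstr := Pmid_strict' hu ⟨a', by omega⟩ ⟨b', by omega⟩ (d - 1)
        (by show a' ≤ d - 1; omega) (by show d - 1 + 1 ≤ b'; omega)
        (by rw [show d - 1 + 1 = d by omega]; exact hd)
      have hlt : S ⟨bx (a' + 1), hbox a' (by omega)⟩ < S ⟨bx (b' + 1), hbox b' (by omega)⟩ :=
        hstr
      have e1 : E (bx (a' + 1)) = (S ⟨bx (a' + 1), hbox a' (by omega)⟩ : ℕ) + 1 :=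
        extFill_box _
      have e2 : E (bx (b' + 1)) = (S ⟨bx (b' + 1), hbox b' (by omega)⟩ : ℕ) + 1 :=
        extFill_box _
      rw [e1, e2]
      exact Nat.add_lt_add_right (Fin.lt_def.mp hlt) 1
    have hposE : ∀ p ∈ boxes lam, 1 ≤ E p := by
      intro p hp
      have e1 : E p = (S ⟨p, hp⟩ : ℕ) + 1 := extFill_box hp
      omega
    have hrowE : ∀ p ∈ boxes lam, ∀ q ∈ boxes lam, p.1 = q.1 → p.2 ≤ q.2 → E p ≤ E q := by
      intro p hp q hq h1 h2
      have hTle : T p ≤ T q := hT.1.row_weak p hp q hq h1 h2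
      have hrp := hrange p hp
      have hrq := hrange q hq
      have := chainE (T p) (T q) hrp.1 hTle hrq.2.1
      rwa [hrp.2.2, hrq.2.2] at this
    have hcolE : ∀ p ∈ boxes lam, ∀ q ∈ boxes lam, p.2 = q.2 → p.1 < q.1 → E p < E q := by
      intro p hp q hq h1 h2
      have hTlt : T p < T q := hT.1.col_strict p hp q hq h1 h2
      have hrp := hrange p hp
      have hrq := hrange q hq
      have hdes : ∃ d, T p ≤ d ∧ d < T q ∧ d ∈ DT m bx := by
        by_contra hcon
        push_neg at hcon
        have hstep : ∀ c, c ≤ T q - T p → (bx (T p + c)).1 ≤ (bx (T p)).1 := by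
          intro c
          induction c with
          | zero => intro _; exact le_refl _
          | succ c ih =>
            intro hc
            have h3 := ih (by omega)
            have hdn : T p + c ∉ DT m bx := hcon _ (by omega) (by omega)
            rw [mem_DT] at hdn
            push_neg at hdn
            have h4 : (bx (T p + c + 1)).1 ≤ (bx (T p + c)).1 := by
              have := hdn (by omega) (by omega)
              omega
            exact le_trans h4 h3
        have hfin := hstep (T q - T p) (le_refl _)
        rw [show T p + (T q - T p) = T q by omega] at hfin
        rw [hrp.2.2, hrq.2.2] at hfin
        omega
      obtain ⟨d, hd1, hd2, hd3⟩ := hdes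
      have := strictE (T p) d (T q) hrp.1 hd1 hd2 hrq.2.1 hd3
      rwa [hrp.2.2, hrq.2.2] at this
    refine ⟨⟨hposE, hrowE, hcolE⟩, ?_⟩
    have hconsec : ∀ j, 1 ≤ j → j + 1 ≤ m → E (bx j) = E (bx (j + 1)) →
        (bx j).2 < (bx (j + 1)).2 := by
      intro j hj hjm heq
      have hpj : bx j ∈ boxes lam := (hbx j hj (by omega)).1
      have hqj : bx (j + 1) ∈ boxes lam := (hbx (j + 1) (by omega) hjm).1
      have hTj : T (bx j) = j := (hbx j hj (by omega)).2
      have hTj1 : T (bx (j + 1)) = j + 1 := (hbx (j + 1) (by omega) hjm).2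
      rcases lt_trichotomy (bx j).1 (bx (j + 1)).1 with hr | hr | hr
      · exfalso
        have hdj : j ∈ DT m bx := mem_DT.mpr ⟨by omega, by omega, hr⟩
        have := strictE j j (j + 1) hj (le_refl _) (by omega) hjm hdj
        omega
      · by_contra hcol
        push_neg at hcol
        have := hT.1.row_weak (bx (j + 1)) hqj (bx j) hpj hr.symm hcol
        omega
      · by_contra hcol
        push_neg at hcol
        have hw : ((bx (j + 1)).1, (bx j).2) ∈ boxes lam := boxes_rect hdec hpj (le_of_lt hr)
        have h1 : E (bx (j + 1)) ≤ E ((bx (j + 1)).1, (bx j).2) := hrowE _ hqj _ hw rfl hcol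
        have h2 : E ((bx (j + 1)).1, (bx j).2) < E (bx j) := hcolE _ hw _ hpj rfl hr
        omega
    have hrun : ∀ c j, 1 ≤ j → j + c + 1 ≤ m → E (bx j) = E (bx (j + c + 1)) →
        (bx j).2 < (bx (j + c + 1)).2 := by
      intro c
      induction c with
      | zero => intro j hj hm' heq; exact hconsec j hj hm' heq
      | succ c ih =>
        intro j hj hm' heq
        have harith : j + (c + 1) + 1 = j + c + 1 + 1 := by omega
        rw [harith] at heq hm' ⊢
        have h1 : E (bx j) ≤ E (bx (j + c + 1)) := chainE j (j + c + 1) hj (by omega) (by omega)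
        have h2 : E (bx (j + c + 1)) ≤ E (bx (j + c + 1 + 1)) :=
          chainE _ _ (by omega) (by omega) (by omega)
        have e1 : E (bx j) = E (bx (j + c + 1)) := by omega
        have e2 : E (bx (j + c + 1)) = E (bx (j + c + 1 + 1)) := by omega
        have col1 : (bx j).2 < (bx (j + c + 1)).2 := ih j hj (by omega) e1
        have col2 : (bx (j + c + 1)).2 < (bx (j + c + 1 + 1)).2 :=
          hconsec (j + c + 1) (by omega) (by omega) e2
        omega
    have hrun' : ∀ a b, 1 ≤ a → a < b → b ≤ m → E (bx a) = E (bx b) →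
        (bx a).2 < (bx b).2 := by
      intro a b ha hab hb heq
      have harith : a + (b - a - 1) + 1 = b := by omega
      have := hrun (b - a - 1) a ha (by omega) (by rw [harith]; exact heq)
      rwa [harith] at this
    intro p hp
    have hrp := hrange p hp
    have key : ∀ x ∈ boxes lam,
        ((E x < E p ∨ (E x = E p ∧ x.2 < p.2)) ↔ T x < T p) := by
      intro x hx
      have hrx := hrange x hx
      rcases lt_trichotomy (T x) (T p) with h | h | h
      · simp only [h, iff_true]
        have hle : E (bx (T x)) ≤ E (bx (T p)) := chainE _ _ hrx.1 (le_of_lt h) hrp.2.1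
        rw [hrx.2.2, hrp.2.2] at hle
        rcases eq_or_lt_of_le hle with heq | hlt
        · right
          refine ⟨heq, ?_⟩
          have := hrun' (T x) (T p) hrx.1 h hrp.2.1
            (by rw [hrx.2.2, hrp.2.2]; exact heq)
          rwa [hrx.2.2, hrp.2.2] at this
        · left; exact hlt
      · have hxp : x = p := T_inj hT hx hp hrx.1 (h ▸ hrp.2.1) h
        subst hxp
        simp
      · simp only [show ¬(T x < T p) by omega, iff_false]
        have hle : E (bx (T p)) ≤ E (bx (T x)) := chainE _ _ hrp.1 (le_of_lt h) hrx.2.1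
        rw [hrx.2.2, hrp.2.2] at hle
        rintro (h1 | ⟨h1, h2⟩)
        · omega
        · have := hrun' (T p) (T x) hrp.1 h hrx.2.1
            (by rw [hrx.2.2, hrp.2.2]; exact h1.symm)
          rw [hrx.2.2, hrp.2.2] at this
          omega
    unfold standardization
    have hfilter : (boxes lam).filter (fun q => E q < E p ∨ (E q = E p ∧ q.2 < p.2))
        = (boxes lam).filter (fun x => T x < T p) :=
      Finset.filter_congr key
    rw [hfilter]
    have himage : (boxes lam).filter (fun x => T x < T p)
        = (Finset.Icc 1 (T p - 1)).image bx := by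
      ext x
      simp only [Finset.mem_filter, Finset.mem_image, Finset.mem_Icc]
      constructor
      · rintro ⟨hxb, hxlt⟩
        have hrx := hrange x hxb
        exact ⟨T x, ⟨hrx.1, by omega⟩, hrx.2.2⟩
      · rintro ⟨v, ⟨hv1, hv2⟩, rfl⟩
        have hb := hbx v hv1 (by omega)
        exact ⟨hb.1, by rw [hb.2]; omega⟩
    rw [himage, Finset.card_image_of_injOn, Nat.card_Icc]
    · omega
    · intro a ha b hb hab
      rw [Finset.mem_coe, Finset.mem_Icc] at ha hb
      have h1 := (hbx a ha.1 (by omega)).2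
      have h2 := (hbx b hb.1 (by omega)).2
      rw [hab] at h1
      omega

end SSYTside

theorem quasisymmetric_expansion_of_standardization_class
    (m n : ℕ) (hn : 0 < n) (lam : List ℕ)
    (hdec : List.Pairwise (· ≥ ·) lam) (hpos : ∀ x ∈ lam, 0 < x) (hsum : lam.sum = m)
    (T : ℕ × ℕ → ℕ) (hT : IsSYT lam m T)
    (bx : ℕ → ℕ × ℕ)
    (hbx : ∀ k : ℕ, 1 ≤ k → k ≤ m → bx k ∈ boxes lam ∧ T (bx k) = k) :
    (∑ S ∈ Finset.univ.filter
        (fun S : {p // p ∈ boxes lam} → Fin n =>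
          IsSSYT lam (extFill lam S) ∧
          ∀ p ∈ boxes lam, standardization lam (extFill lam S) p = T p),
      ∏ b : {p // p ∈ boxes lam}, (X (S b) : MvPolynomial (Fin n) ℤ))
    =
    (∑ U ∈ Finset.univ.filter
        (fun U : {p // p ∈ boxes (compOfSet m
            ((Finset.Ioo 0 m).filter (fun k => (bx k).1 < (bx (k + 1)).1)))} → Fin n =>
          IsCompTabFn _ U),
      ∏ b, (X (U b) : MvPolynomial (Fin n) ℤ)) := by
  classical
  have hD : DT m bx ⊆ Finset.Ioo 0 m := Finset.filter_subset _ _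
  have hL :
      (∑ S ∈ Finset.univ.filter
        (fun S : {p // p ∈ boxes lam} → Fin n =>
          IsSSYT lam (extFill lam S) ∧
          ∀ p ∈ boxes lam, standardization lam (extFill lam S) p = T p),
      ∏ b : {p // p ∈ boxes lam}, (X (S b) : MvPolynomial (Fin n) ℤ))
      = ∑ u ∈ Finset.univ.filter (fun u : Fin m → Fin n => Pmid m n (DT m bx) u),
          ∏ i : Fin m, (X (u i) : MvPolynomial (Fin n) ℤ) := by
    apply Finset.sum_equiv
      (Equiv.arrowCongr (eBox hsum hT hbx).symm (Equiv.refl (Fin n)))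
    · intro S
      simp only [Finset.mem_filter, Finset.mem_univ, true_and]
      rw [ssyt_iff hdec hsum hT hbx S]
      exact Iff.rfl
    · intro S _
      exact (Fintype.prod_equiv (eBox hsum hT hbx)
        (fun i => (X (S (eBox hsum hT hbx i)) : MvPolynomial (Fin n) ℤ))
        (fun b => (X (S b) : MvPolynomial (Fin n) ℤ)) (fun i => rfl)).symm
  have hR :
      (∑ U ∈ Finset.univ.filter
        (fun U : {p // p ∈ boxes (compOfSet m (DT m bx))} → Fin n =>
          IsCompTabFn _ U),
      ∏ b, (X (U b) : MvPolynomial (Fin n) ℤ))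
      = ∑ u ∈ Finset.univ.filter (fun u : Fin m → Fin n => Pmid m n (DT m bx) u),
          ∏ i : Fin m, (X (u i) : MvPolynomial (Fin n) ℤ) := by
    apply Finset.sum_equiv (Equiv.arrowCongr (eC hD).symm (Equiv.refl (Fin n)))
    · intro U
      simp only [Finset.mem_filter, Finset.mem_univ, true_and]
      rw [compTab_iff hD U]
      exact Iff.rfl
    · intro U _
      exact (Fintype.prod_equiv (eC hD)
        (fun i => (X (U (eC hD i)) : MvPolynomial (Fin n) ℤ))
        (fun b => (X (U b) : MvPolynomial (Fin n) ℤ)) (fun i => rfl)).symm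
  rw [hL]
  exact hR.symm
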